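/- arXiv:1404.0122 — 3 statements merged into one kernel-verified Lean document; each statement's English description precedes it below -/
import Mathlib

section
/- Let 0 < α₁ < α₂ and let X_i ~ Gamma(α_i, α_i) (shape α_i, rate α_i) for i = 1, 2. Define Δ(x) = P(X₂ < x) − P(X₁ < x). Then there exists a unique point x₀ > 0 such that Δ(x) < 0 for 0 < x < x₀ and Δ(x) > 0 for x > x₀. -/
open MeasureTheory ProbabilityTheory Real Set Filter
open scoped ENNReal

namespace GammaCrossAux

noncomputable def fc (a x : ℝ) : ℝ := a ^ a / Real.Gamma a * x ^ (a - 1) * Real.exp (-(a * x))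
noncomputable def psi (L d x : ℝ) : ℝ := L + d * Real.log x - d * x

lemma fc_pos {a x : ℝ} (ha : 0 < a) (hx : 0 < x) : 0 < fc a x := by
  have hG := Real.Gamma_pos_of_pos ha
  unfold fc
  positivity

lemma fc_intervalIntegrable {a : ℝ} (ha : 0 < a) (y z : ℝ) :
    IntervalIntegrable (fc a) volume y z := by
  have h1 : IntervalIntegrable (fun x : ℝ => x ^ (a - 1)) volume y z :=
    intervalIntegral.intervalIntegrable_rpow' (by linarith)
  have h2 := h1.mul_continuousOn
    (g := fun x => a ^ a / Real.Gamma a * Real.exp (-(a * x)))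
    (Continuous.continuousOn (by continuity))
  have : (fun x => x ^ (a - 1) * (a ^ a / Real.Gamma a * Real.exp (-(a * x)))) = fc a := by
    funext x; unfold fc; ring
  rwa [this] at h2

lemma fc_eq_pdf {a x : ℝ} (hx : 0 ≤ x) : gammaPDFReal a a x = fc a x := by
  simp [gammaPDFReal, fc, if_pos hx]

lemma gammaMeasure_singleton (a r x : ℝ) : gammaMeasure a r {x} = 0 := by
  rw [gammaMeasure, withDensity_apply _ (measurableSet_singleton x)]
  simp

lemma measure_Iio_eq_integral {a : ℝ} (ha : 0 < a) {x : ℝ} (hx : 0 ≤ x) :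
    (gammaMeasure a a (Iio x)).toReal = ∫ t in (0:ℝ)..x, fc a t := by
  rw [gammaMeasure, withDensity_apply _ measurableSet_Iio]
  have h1 : ∫ t in Iio x, gammaPDFReal a a t =
      (∫⁻ t in Iio x, gammaPDF a a t).toReal := by
    rw [integral_eq_lintegral_of_nonneg_ae
      (ae_of_all _ fun t => gammaPDFReal_nonneg ha ha t)
      (measurable_gammaPDFReal a a).aestronglyMeasurable.restrict]
    rfl
  rw [← h1]
  have h2 : ∫ t in Iio x, gammaPDFReal a a t = ∫ t in Ioo 0 x, gammaPDFReal a a t := by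
    apply setIntegral_eq_of_subset_of_ae_diff_eq_zero measurableSet_Iio.nullMeasurableSet
    · exact fun t ht => ht.2
    · filter_upwards [compl_mem_ae_iff.2 (volume_singleton (a := (0:ℝ)))] with t ht0 htd
      rcases lt_or_ge t 0 with h | h
      · simp [gammaPDFReal, not_le.2 h]
      · rcases eq_or_lt_of_le h with h' | h'
        · exact absurd h'.symm ht0
        · exact absurd ⟨h', htd.1⟩ htd.2
  rw [h2, intervalIntegral.integral_of_le hx, MeasureTheory.integral_Ioc_eq_integral_Ioo]
  exact setIntegral_congr_fun measurableSet_Ioo fun t ht => fc_eq_pdf ht.1.le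

lemma tendsto_measure_Iio_one {a : ℝ} (ha : 0 < a) :
    Tendsto (fun x => (gammaMeasure a a (Iio x)).toReal) atTop (nhds 1) := by
  have hprob : IsProbabilityMeasure (gammaMeasure a a) := isProbabilityMeasure_gammaMeasure ha ha
  have heq : ∀ x : ℝ, gammaMeasure a a (Iio x) = gammaMeasure a a (Iic x) := fun x =>
    measure_congr (Iio_ae_eq_Iic' (gammaMeasure_singleton a a x))
  have h := tendsto_measure_Iic_atTop (gammaMeasure a a)
  rw [measure_univ] at h
  have h2 : Tendsto (fun x => (gammaMeasure a a (Iic x)).toReal) atTop (nhds (1:ℝ≥0∞).toReal) :=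
    (ENNReal.tendsto_toReal (by simp)).comp h
  simpa [heq] using h2

lemma psi_hasDerivAt {d L x : ℝ} (hx : 0 < x) :
    HasDerivAt (psi L d) (d * x⁻¹ - d * 1) x := by
  have h1 : HasDerivAt (fun x : ℝ => L + d * Real.log x) (d * x⁻¹) x :=
    ((Real.hasDerivAt_log hx.ne').const_mul d).const_add L
  exact h1.sub ((hasDerivAt_id x).const_mul d)

lemma psi_strictMonoOn {L d : ℝ} (hd : 0 < d) : StrictMonoOn (psi L d) (Ioc 0 1) := by
  apply strictMonoOn_of_deriv_pos (convex_Ioc 0 1)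
  · apply ContinuousOn.sub (ContinuousOn.add continuousOn_const _) (by fun_prop)
    exact (Real.continuousOn_log.mono (by intro x hx; exact ne_of_gt hx.1)).const_smul d
  · intro x hx
    rw [interior_Ioc] at hx
    rw [(psi_hasDerivAt hx.1).deriv]
    have h1 : 1 < x⁻¹ := (one_lt_inv₀ hx.1).mpr hx.2
    nlinarith

lemma psi_strictAntiOn {L d : ℝ} (hd : 0 < d) : StrictAntiOn (psi L d) (Ici 1) := by
  apply strictAntiOn_of_deriv_neg (convex_Ici 1)
  · apply ContinuousOn.sub (ContinuousOn.add continuousOn_const _) (by fun_prop)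
    exact (Real.continuousOn_log.mono
      (by intro x hx; exact ne_of_gt (lt_of_lt_of_le one_pos hx))).const_smul d
  · intro x hx
    rw [interior_Ici] at hx
    have hx0 : (0:ℝ) < x := lt_trans one_pos hx
    rw [(psi_hasDerivAt hx0).deriv]
    have h1 : x⁻¹ < 1 := by
      rw [inv_lt_one_iff₀]; right; exact hx
    nlinarith

lemma psi_small {L d : ℝ} (hd : 0 < d) : ∃ u : ℝ, 0 < u ∧ u < 1 ∧ psi L d u < 0 := by
  refine ⟨min (Real.exp ((-1 - L) / d)) (1 / 2), lt_min (Real.exp_pos _) (by norm_num),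
    lt_of_le_of_lt (min_le_right _ _) (by norm_num), ?_⟩
  set u := min (Real.exp ((-1 - L) / d)) (1 / 2) with hu
  have hu0 : 0 < u := lt_min (Real.exp_pos _) (by norm_num)
  have h1 : Real.log u ≤ (-1 - L) / d := by
    calc Real.log u ≤ Real.log (Real.exp ((-1 - L) / d)) :=
          Real.log_le_log hu0 (min_le_left _ _)
      _ = (-1 - L) / d := Real.log_exp _
  have h2 : d * Real.log u ≤ -1 - L := by
    rw [← le_div_iff₀' hd]; exact h1
  have : psi L d u = L + d * Real.log u - d * u := rfl
  nlinarith [mul_pos hd hu0]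

lemma psi_big {L d : ℝ} (hd : 0 < d) : ∃ v : ℝ, 1 < v ∧ psi L d v < 0 := by
  refine ⟨max 16 (2 * L / d + 1), lt_of_lt_of_le (by norm_num) (le_max_left _ _), ?_⟩
  set v := max 16 (2 * L / d + 1) with hv
  have hv16 : (16:ℝ) ≤ v := le_max_left _ _
  have hv0 : (0:ℝ) < v := by linarith
  have hvL : 2 * L / d + 1 ≤ v := le_max_right _ _
  have hLv : 2 * L < d * v := by
    have := (div_le_iff₀ hd).mp (by linarith : 2 * L / d ≤ v - 1)
    nlinarith
  have hsq : Real.sqrt v ≤ v / 4 := by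
    rw [show v / 4 = Real.sqrt ((v / 4) ^ 2) from (Real.sqrt_sq (by linarith)).symm]
    apply Real.sqrt_le_sqrt; nlinarith
  have hlog : Real.log v ≤ 2 * Real.sqrt v := by
    have h1 : Real.log (Real.sqrt v) ≤ Real.sqrt v - 1 :=
      Real.log_le_sub_one_of_pos (Real.sqrt_pos.mpr hv0)
    have h2 : Real.log (Real.sqrt v) = Real.log v / 2 := Real.log_sqrt hv0.le
    linarith
  have : psi L d v = L + d * Real.log v - d * v := rfl
  have h3 : d * Real.log v ≤ d * (v / 2) := by
    apply mul_le_mul_of_nonneg_left _ hd.le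
    nlinarith
  nlinarith

lemma fc_factor {a1 a2 : ℝ} (h1 : 0 < a1) (h2 : 0 < a2) {x : ℝ} (hx : 0 < x) :
    fc a2 x = fc a1 x *
      Real.exp (psi (Real.log (a2 ^ a2 / Real.Gamma a2) - Real.log (a1 ^ a1 / Real.Gamma a1))
        (a2 - a1) x) := by
  have hA1 : 0 < a1 ^ a1 / Real.Gamma a1 := by
    have := Real.Gamma_pos_of_pos h1; positivity
  have hA2 : 0 < a2 ^ a2 / Real.Gamma a2 := by
    have := Real.Gamma_pos_of_pos h2; positivity
  unfold psi
  rw [show Real.log (a2 ^ a2 / Real.Gamma a2) - Real.log (a1 ^ a1 / Real.Gamma a1) +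
      (a2 - a1) * Real.log x - (a2 - a1) * x
      = (Real.log (a2 ^ a2 / Real.Gamma a2) - Real.log (a1 ^ a1 / Real.Gamma a1)) +
        (Real.log x * (a2 - a1)) + (-((a2 - a1) * x)) by ring]
  rw [Real.exp_add, Real.exp_add, Real.exp_sub, Real.exp_log hA1, Real.exp_log hA2,
    ← Real.rpow_def_of_pos hx]
  unfold fc
  rw [show a1 ^ a1 / Real.Gamma a1 * x ^ (a1 - 1) * Real.exp (-(a1 * x)) *
      (a2 ^ a2 / Real.Gamma a2 / (a1 ^ a1 / Real.Gamma a1) * x ^ (a2 - a1) *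
        Real.exp (-((a2 - a1) * x)))
      = (a2 ^ a2 / Real.Gamma a2) * (x ^ (a1 - 1) * x ^ (a2 - a1)) *
        (Real.exp (-(a1 * x)) * Real.exp (-((a2 - a1) * x))) *
        (a1 ^ a1 / Real.Gamma a1 / (a1 ^ a1 / Real.Gamma a1)) by ring]
  rw [div_self (ne_of_gt hA1), mul_one, ← Real.rpow_add hx, ← Real.exp_add]
  rw [show a1 - 1 + (a2 - a1) = a2 - 1 by ring,
    show -(a1 * x) + -((a2 - a1) * x) = -(a2 * x) by ring]

end GammaCrossAux

open GammaCrossAux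

/-- Monotonicity of gamma CDFs: for `0 < α₁ < α₂` and `Xᵢ ~ Gamma(αᵢ, αᵢ)`,
the difference `Δ(x) = P(X₂ < x) − P(X₁ < x)` changes sign exactly once on `(0,∞)`:
it is negative before a unique point `x₀` and positive after it. -/
theorem gamma_cdf_diff_sign_change (a1 a2 : ℝ) (h1 : 0 < a1) (h12 : a1 < a2) :
    ∃! x0 : ℝ, 0 < x0 ∧
      (∀ x : ℝ, 0 < x → x < x0 →
        (gammaMeasure a2 a2 (Iio x)).toReal - (gammaMeasure a1 a1 (Iio x)).toReal < 0) ∧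
      (∀ x : ℝ, x0 < x →
        0 < (gammaMeasure a2 a2 (Iio x)).toReal - (gammaMeasure a1 a1 (Iio x)).toReal) := by
  have h2 : 0 < a2 := lt_trans h1 h12
  set d : ℝ := a2 - a1 with hd_def
  have hd : 0 < d := sub_pos.mpr h12
  set L : ℝ := Real.log (a2 ^ a2 / Real.Gamma a2) - Real.log (a1 ^ a1 / Real.Gamma a1) with hL_def
  set g : ℝ → ℝ := fun t => fc a2 t - fc a1 t with hg_def
  set D : ℝ → ℝ := fun x => ∫ t in (0:ℝ)..x, g t with hD_def
  have hgi : ∀ y z : ℝ, IntervalIntegrable g volume y z := fun y z =>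
    (fc_intervalIntegrable h2 y z).sub (fc_intervalIntegrable h1 y z)
  have hDmeas : ∀ x : ℝ, 0 ≤ x →
      (gammaMeasure a2 a2 (Iio x)).toReal - (gammaMeasure a1 a1 (Iio x)).toReal = D x := by
    intro x hx
    rw [measure_Iio_eq_integral h2 hx, measure_Iio_eq_integral h1 hx]
    simp only [hD_def, hg_def]
    exact (intervalIntegral.integral_sub (fc_intervalIntegrable h2 0 x)
      (fc_intervalIntegrable h1 0 x)).symm
  have hD0 : D 0 = 0 := intervalIntegral.integral_same
  have hDdiff : ∀ y z : ℝ, D z - D y = ∫ t in y..z, g t := by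
    intro y z
    have h := intervalIntegral.integral_add_adjacent_intervals (hgi 0 y) (hgi y z)
    simp only [hD_def]
    linarith
  -- sign of g versus psi
  have hsign : ∀ x : ℝ, 0 < x → ((0 < g x ↔ 0 < psi L d x) ∧ (g x < 0 ↔ psi L d x < 0)) := by
    intro x hx
    have hfact : g x = fc a1 x * (Real.exp (psi L d x) - 1) := by
      simp only [hg_def]
      rw [fc_factor h1 h2 hx, hL_def, hd_def]
      ring
    have hf1 := fc_pos h1 hx
    rw [hfact]
    constructor
    · constructor
      · intro h
        have h' : 1 < Real.exp (psi L d x) := by nlinarith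
        rwa [Real.one_lt_exp_iff] at h'
      · intro h
        have h' : 1 < Real.exp (psi L d x) := Real.one_lt_exp_iff.mpr h
        nlinarith
    · constructor
      · intro h
        have h' : Real.exp (psi L d x) - 1 < 0 := by
          by_contra hc
          push_neg at hc
          nlinarith
        rw [sub_neg, Real.exp_lt_one_iff] at h'
        exact h'
      · intro h
        have h' : Real.exp (psi L d x) - 1 < 0 := by
          rw [sub_neg, Real.exp_lt_one_iff]; exact h
        nlinarith
  have hgle : ∀ x : ℝ, 0 < x → psi L d x ≤ 0 → g x ≤ 0 := fun x hx h =>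
    not_lt.mp fun hc => absurd ((hsign x hx).1.mp hc) (not_lt.mpr h)
  -- monotonicity helpers
  have hinc : ∀ y z : ℝ, 0 ≤ y → y < z → (∀ t, y < t → t < z → 0 < psi L d t) → D y < D z := by
    intro y z hy hyz hpos
    have h := intervalIntegral.intervalIntegral_pos_of_pos_on (hgi y z)
      (fun t ht => (hsign t (lt_of_le_of_lt hy ht.1)).1.mpr (hpos t ht.1 ht.2)) hyz
    have := hDdiff y z; linarith
  have hdec : ∀ y z : ℝ, 0 ≤ y → y < z → (∀ t, y < t → t < z → psi L d t < 0) → D z < D y := by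
    intro y z hy hyz hneg
    have h := intervalIntegral.intervalIntegral_pos_of_pos_on (f := fun t => -(g t))
      ((hgi y z).neg) (fun t ht => by
        show (0:ℝ) < -(g t)
        have := (hsign t (lt_of_le_of_lt hy ht.1)).2.mpr (hneg t ht.1 ht.2); linarith) hyz
    rw [intervalIntegral.integral_neg] at h
    have := hDdiff y z; linarith
  have hdec_le : ∀ y z : ℝ, 0 < y → y ≤ z → (∀ t, y ≤ t → psi L d t ≤ 0) → D z ≤ D y := by
    intro y z hy hyz hnp
    have h0 : 0 ≤ ∫ t in y..z, -(g t) :=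
      intervalIntegral.integral_nonneg hyz fun u hu => by
        have := hgle u (lt_of_lt_of_le hy hu.1) (hnp u hu.1); linarith
    rw [intervalIntegral.integral_neg] at h0
    have := hDdiff y z; linarith
  -- tail limit
  have hDtend : Tendsto D atTop (nhds 0) := by
    have h := (tendsto_measure_Iio_one h2).sub (tendsto_measure_Iio_one h1)
    rw [sub_self] at h
    exact h.congr' (by filter_upwards [eventually_ge_atTop (0:ℝ)] with x hx using hDmeas x hx)
  -- psi at 1 is positive
  have hpsi1 : 0 < psi L d 1 := by
    by_contra hc
    push_neg at hc
    have hle : ∀ t : ℝ, 0 < t → psi L d t ≤ 0 := by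
      intro t ht
      rcases lt_trichotomy t 1 with h | h | h
      · exact le_of_lt (lt_of_lt_of_le
          (psi_strictMonoOn (L := L) hd ⟨ht, h.le⟩ ⟨one_pos, le_refl 1⟩ h) hc)
      · rw [h]; exact hc
      · exact le_of_lt (lt_of_lt_of_le (psi_strictAntiOn (L := L) hd (Set.mem_Ici.mpr le_rfl) h.le h) hc)
    have hD1 : D 1 < 0 := by
      have := hdec 0 1 (le_refl 0) one_pos fun t ht ht1 =>
        lt_of_lt_of_le (psi_strictMonoOn (L := L) hd ⟨ht, ht1.le⟩ ⟨one_pos, le_refl 1⟩ ht1) hc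
      linarith
    have h01 : 0 ≤ D 1 := by
      apply le_of_tendsto hDtend
      filter_upwards [eventually_ge_atTop (1:ℝ)] with x hx
      exact hdec_le 1 x one_pos hx fun t ht => hle t (lt_of_lt_of_le one_pos ht)
    linarith
  -- the two roots of psi
  obtain ⟨u, hu0, hu1, hupsi⟩ := psi_small (L := L) hd
  obtain ⟨v, hv1, hvpsi⟩ := psi_big (L := L) hd
  have hpsicont : ∀ s : Set ℝ, (∀ x ∈ s, (0:ℝ) < x) → ContinuousOn (psi L d) s := by
    intro s hs
    apply ContinuousOn.sub (ContinuousOn.add continuousOn_const _) (by fun_prop)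
    exact (Real.continuousOn_log.mono (fun x hx => ne_of_gt (hs x hx))).const_smul d
  obtain ⟨b, hbmem, hbpsi⟩ := intermediate_value_Ioo hu1.le
    (hpsicont _ fun x hx => lt_of_lt_of_le hu0 hx.1) (by exact ⟨hupsi, hpsi1⟩ : (0:ℝ) ∈ Ioo (psi L d u) (psi L d 1))
  obtain ⟨c, hcmem, hcpsi⟩ := intermediate_value_Ioo' hv1.le
    (hpsicont _ fun x hx => lt_of_lt_of_le one_pos hx.1) (by exact ⟨hvpsi, hpsi1⟩ : (0:ℝ) ∈ Ioo (psi L d v) (psi L d 1))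
  have hb0 : 0 < b := lt_trans hu0 hbmem.1
  have hb1 : b < 1 := hbmem.2
  have hc1 : 1 < c := hcmem.1
  have hbc : b < c := lt_trans hb1 hc1
  have hc0 : 0 < c := lt_trans one_pos hc1
  -- sign regions of psi
  have S1 : ∀ t : ℝ, 0 < t → t < b → psi L d t < 0 := by
    intro t ht htb
    have := psi_strictMonoOn (L := L) hd ⟨ht, le_of_lt (lt_trans htb hb1)⟩ ⟨hb0, hb1.le⟩ htb
    rw [hbpsi] at this; exact this
  have S2 : ∀ t : ℝ, b < t → t < c → 0 < psi L d t := by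
    intro t hbt htc
    rcases le_or_gt t 1 with h | h
    · have := psi_strictMonoOn (L := L) hd ⟨hb0, hb1.le⟩ ⟨lt_trans hb0 hbt, h⟩ hbt
      rw [hbpsi] at this; exact this
    · have := psi_strictAntiOn (L := L) hd h.le (le_of_lt (lt_trans h htc) : (1:ℝ) ≤ c) htc
      rw [hcpsi] at this; exact this
  have S3 : ∀ t : ℝ, c < t → psi L d t < 0 := by
    intro t hct
    have := psi_strictAntiOn (L := L) hd hc1.le (le_of_lt (lt_trans hc1 hct)) hct
    rw [hcpsi] at this; exact this
  have S4 : ∀ t : ℝ, c ≤ t → psi L d t ≤ 0 := by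
    intro t hct
    rcases eq_or_lt_of_le hct with rfl | h
    · rw [hcpsi]
    · exact (S3 t h).le
  -- D values
  have hDb : D b < 0 := by
    have := hdec 0 b (le_refl 0) hb0 fun t ht htb => S1 t ht htb
    linarith
  have htail : ∀ w : ℝ, c ≤ w → 0 ≤ D w := by
    intro w hw
    apply le_of_tendsto hDtend
    filter_upwards [eventually_ge_atTop w] with x hx
    exact hdec_le w x (lt_of_lt_of_le hc0 hw) hx fun t ht => S4 t (le_trans hw ht)
  have hDc : 0 < D c := by
    have h' : D (c + 1) < D c := hdec c (c + 1) hc0.le (by linarith)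
      fun t ht _ => S3 t ht
    have h'' := htail (c + 1) (by linarith)
    linarith
  -- continuity of D on [b, c] and the crossing point
  have hDcont : ContinuousOn D (Icc b c) := by
    have h := intervalIntegral.continuousOn_primitive_interval' (hgi b c) left_mem_uIcc
    have heq : EqOn D (fun x => D b + ∫ t in b..x, g t) (uIcc b c) := by
      intro x _
      have := hDdiff b x
      simp only; linarith
    have := (continuousOn_const.add h).congr heq
    rwa [uIcc_of_le hbc.le] at this
  obtain ⟨x0, hx0mem, hx0D⟩ := intermediate_value_Ioo hbc.le hDcont
    (by exact ⟨hDb, hDc⟩ : (0:ℝ) ∈ Ioo (D b) (D c))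
  have hx0b : b < x0 := hx0mem.1
  have hx0c : x0 < c := hx0mem.2
  have hx0pos : 0 < x0 := lt_trans hb0 hx0b
  -- main sign properties
  have Hneg : ∀ x : ℝ, 0 < x → x < x0 → D x < 0 := by
    intro x hx hxx0
    rcases le_or_gt x b with h | h
    · have := hdec 0 x (le_refl 0) hx fun t ht htx => S1 t ht (lt_of_lt_of_le htx h)
      linarith
    · have := hinc x x0 hx.le hxx0 fun t hxt htx0 =>
        S2 t (lt_trans h hxt) (lt_trans htx0 hx0c)
      rw [hx0D] at this; linarith
  have Hpos : ∀ x : ℝ, x0 < x → 0 < D x := by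
    intro x hx0x
    rcases le_or_gt x c with h | h
    · have := hinc x0 x hx0pos.le hx0x fun t ht htx =>
        S2 t (lt_trans hx0b ht) (lt_of_lt_of_le htx h)
      rw [hx0D] at this; linarith
    · have h' : D (x + 1) < D x := hdec x (x + 1) (lt_trans hc0 h).le (by linarith)
        fun t ht _ => S3 t (lt_trans h ht)
      have h'' := htail (x + 1) (by linarith)
      linarith
  refine ⟨x0, ⟨hx0pos, ?_, ?_⟩, ?_⟩
  · intro x hx hxx0
    rw [hDmeas x hx.le]
    exact Hneg x hx hxx0
  · intro x hx0x
    rw [hDmeas x (lt_trans hx0pos hx0x).le]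
    exact Hpos x hx0x
  · rintro y ⟨hy0, hyneg, hypos⟩
    by_contra hne
    rcases lt_or_gt_of_ne hne with h | h
    · set m := (y + x0) / 2 with hm
      have hm0 : 0 < m := by simp only [hm]; linarith
      have hA : 0 < (gammaMeasure a2 a2 (Iio m)).toReal - (gammaMeasure a1 a1 (Iio m)).toReal :=
        hypos m (by simp only [hm]; linarith)
      have hB : (gammaMeasure a2 a2 (Iio m)).toReal - (gammaMeasure a1 a1 (Iio m)).toReal < 0 := by
        rw [hDmeas m hm0.le]
        exact Hneg m hm0 (by simp only [hm]; linarith)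
      linarith
    · set m := (x0 + y) / 2 with hm
      have hm0 : 0 < m := by simp only [hm]; linarith
      have hA : (gammaMeasure a2 a2 (Iio m)).toReal - (gammaMeasure a1 a1 (Iio m)).toReal < 0 :=
        hyneg m hm0 (by simp only [hm]; linarith)
      have hB : 0 < (gammaMeasure a2 a2 (Iio m)).toReal - (gammaMeasure a1 a1 (Iio m)).toReal := by
        rw [hDmeas m hm0.le]
        exact Hpos m (by simp only [hm]; linarith)
      linarith
end

section
/- For α₂ > α₁ > 0, the difference of gamma CDFs Δ(x) = P(Gamma(α₂,α₂) < x) − P(Gamma(α₁,α₁) < x) satisfies: there exists an interval (a, b) containing x = 1 such that Δ'(x) > 0 for x ∈ (a, b) and Δ'(x) < 0 for x ∈ (0, a) ∪ (b, ∞). -/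
open MeasureTheory ProbabilityTheory Real Set Filter

namespace GammaDiffAux

noncomputable def psi (x : ℝ) : ℝ := x * exp (-x)

lemma psi_pos {x : ℝ} (hx : 0 < x) : 0 < psi x := mul_pos hx (exp_pos _)

lemma continuous_psi : Continuous psi := continuous_id.mul (continuous_neg.rexp)

lemma hasDerivAt_psi (x : ℝ) : HasDerivAt psi ((1 - x) * exp (-x)) x := by
  have h : HasDerivAt (fun y : ℝ => y * exp (-y)) (1 * exp (-x) + x * (exp (-x) * -1)) x :=
    (hasDerivAt_id x).mul ((hasDerivAt_id x).neg.exp)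
  convert h using 1
  · rfl
  · ring

lemma strictMonoOn_psi : StrictMonoOn psi (Icc 0 1) := by
  apply strictMonoOn_of_deriv_pos (convex_Icc 0 1) continuous_psi.continuousOn
  intro x hx
  rw [interior_Icc] at hx
  rw [(hasDerivAt_psi x).deriv]
  have := hx.2
  nlinarith [exp_pos (-x)]

lemma strictAntiOn_psi : StrictAntiOn psi (Ici 1) := by
  apply strictAntiOn_of_deriv_neg (convex_Ici 1) continuous_psi.continuousOn
  intro x hx
  rw [interior_Ici] at hx
  rw [(hasDerivAt_psi x).deriv]
  have : (1:ℝ) < x := hx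
  nlinarith [exp_pos (-x)]

/-- The integrand of the Gamma-type integral with rate `α`. -/
noncomputable def f (α x : ℝ) : ℝ := x ^ (α - 1) * exp (-(α * x))

lemma integrableOn_f {α : ℝ} (hα : 0 < α) : IntegrableOn (f α) (Ioi 0) := by
  have h := integrableOn_rpow_mul_exp_neg_mul_rpow (p := 1) (s := α - 1) (b := α)
    (by linarith) one_pos hα
  refine h.congr_fun (fun x hx => ?_) measurableSet_Ioi
  simp [f, Real.rpow_one, neg_mul]

lemma integral_f {α : ℝ} (hα : 0 < α) :
    ∫ x in Ioi 0, f α x = (1 / α) ^ α * Real.Gamma α :=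
  Real.integral_rpow_mul_exp_neg_mul_Ioi hα hα

lemma g_le_one {x : ℝ} (hx : 0 < x) : x * exp (1 - x) ≤ 1 := by
  have h : x ≤ exp (x - 1) := by have := Real.add_one_le_exp (x - 1); linarith
  calc x * exp (1 - x) ≤ exp (x - 1) * exp (1 - x) :=
        mul_le_mul_of_nonneg_right h (exp_pos _).le
    _ = 1 := by rw [← Real.exp_add]; norm_num

lemma g_lt_one {x : ℝ} (hx : 1 < x) : x * exp (1 - x) < 1 := by
  have h : x < exp (x - 1) := by
    have := Real.add_one_lt_exp (x := x - 1) (by intro h; apply absurd h; intro h'; linarith)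
    linarith
  calc x * exp (1 - x) < exp (x - 1) * exp (1 - x) :=
        mul_lt_mul_of_pos_right h (exp_pos _)
    _ = 1 := by rw [← Real.exp_add]; norm_num

lemma fEq {α x : ℝ} (hx : 0 < x) :
    exp α * f α x = (x * exp (1 - x)) ^ α / x := by
  rw [f, Real.mul_rpow hx.le (exp_pos _).le, ← Real.exp_mul,
    Real.rpow_sub hx, Real.rpow_one,
    show (1 - x) * α = α + -(α * x) by ring, Real.exp_add]
  field_simp

lemma key_integral_lt {a1 a2 : ℝ} (h1 : 0 < a1) (h12 : a1 < a2) :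
    ∫ x in Ioi 0, exp a2 * f a2 x < ∫ x in Ioi 0, exp a1 * f a1 x := by
  have h2 : 0 < a2 := h1.trans h12
  have hi1 : IntegrableOn (fun x => exp a1 * f a1 x) (Ioi 0) :=
    (integrableOn_f h1).const_mul _
  have hi2 : IntegrableOn (fun x => exp a2 * f a2 x) (Ioi 0) :=
    (integrableOn_f h2).const_mul _
  rw [← sub_pos, ← integral_sub hi1 hi2]
  have hpt : ∀ x : ℝ, 0 < x →
      exp a1 * f a1 x - exp a2 * f a2 x
        = ((x * exp (1 - x)) ^ a1 - (x * exp (1 - x)) ^ a2) / x := by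
    intro x hx
    rw [fEq hx, fEq hx, sub_div]
  rw [setIntegral_pos_iff_support_of_nonneg_ae]
  · refine lt_of_lt_of_le ?_ (measure_mono (show Ioi (1:ℝ) ⊆ _ from ?_))
    · simp [Real.volume_Ioi]
    · intro x hx
      have hx1 : (1:ℝ) < x := hx
      have hx0 : (0:ℝ) < x := by linarith
      constructor
      · rw [Function.mem_support, hpt x hx0]
        have hg0 : 0 < x * exp (1 - x) := mul_pos hx0 (exp_pos _)
        have := Real.rpow_lt_rpow_of_exponent_gt hg0 (g_lt_one hx1) h12
        exact div_ne_zero (by linarith) hx0.ne'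
      · exact hx0
  · rw [EventuallyLE, ae_restrict_iff' measurableSet_Ioi]
    refine ae_of_all _ (fun x hx => ?_)
    have hx0 : (0:ℝ) < x := hx
    rw [Pi.zero_apply, hpt x hx0]
    have hg0 : 0 < x * exp (1 - x) := mul_pos hx0 (exp_pos _)
    have := Real.rpow_le_rpow_of_exponent_ge hg0 (g_le_one hx0) h12.le
    have h' : (0:ℝ) ≤ (x * exp (1 - x)) ^ a1 - (x * exp (1 - x)) ^ a2 := by linarith
    positivity
  · exact hi1.sub hi2

lemma gamma_key {a1 a2 : ℝ} (h1 : 0 < a1) (h12 : a1 < a2) :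
    a1 ^ a1 * exp (-a1) / Real.Gamma a1 < a2 ^ a2 * exp (-a2) / Real.Gamma a2 := by
  have h2 : 0 < a2 := h1.trans h12
  have hQ : ∀ α : ℝ, 0 < α →
      ∫ x in Ioi 0, exp α * f α x = exp α * ((1 / α) ^ α * Real.Gamma α) := by
    intro α hα
    rw [integral_const_mul, integral_f hα]
  have hlt := key_integral_lt h1 h12
  rw [hQ a1 h1, hQ a2 h2] at hlt
  have hinv : ∀ α : ℝ, 0 < α →
      α ^ α * exp (-α) / Real.Gamma α = 1 / (exp α * ((1 / α) ^ α * Real.Gamma α)) := by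
    intro α hα
    have hΓ : 0 < Real.Gamma α := Real.Gamma_pos_of_pos hα
    have hα' : (0:ℝ) < α ^ α := Real.rpow_pos_of_pos hα _
    have h2' : α ^ α * (1 / α) ^ α = 1 := by
      rw [← Real.mul_rpow hα.le (by positivity), mul_one_div, div_self hα.ne', Real.one_rpow]
    have hexp : exp (-α) * exp α = 1 := by rw [← Real.exp_add]; simp
    rw [eq_div_iff (by positivity)]
    calc α ^ α * exp (-α) / Real.Gamma α * (exp α * ((1 / α) ^ α * Real.Gamma α))
        = (α ^ α * (1 / α) ^ α) * (exp (-α) * exp α) * (Real.Gamma α / Real.Gamma α) := by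
          ring
      _ = 1 := by rw [h2', hexp, div_self hΓ.ne']; ring
  rw [hinv a1 h1, hinv a2 h2]
  have hp1 : (0:ℝ) < exp a1 * ((1 / a1) ^ a1 * Real.Gamma a1) := by
    have := Real.Gamma_pos_of_pos h1
    positivity
  have hp2 : (0:ℝ) < exp a2 * ((1 / a2) ^ a2 * Real.Gamma a2) := by
    have := Real.Gamma_pos_of_pos h2
    positivity
  exact one_div_lt_one_div_of_lt hp2 hlt

end GammaDiffAux

open GammaDiffAux

/-- For `α₂ > α₁ > 0`, the derivative of `Δ(x) = P(Gamma(α₂,α₂) < x) − P(Gamma(α₁,α₁) < x)`,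
which is the difference of the corresponding densities, is positive on an interval `(a,b)`
containing `1` and negative on `(0,a) ∪ (b,∞)`. -/
theorem gamma_pdf_diff_sign (a1 a2 : ℝ) (h1 : 0 < a1) (h12 : a1 < a2) :
    ∃ a b : ℝ, a < 1 ∧ 1 < b ∧
      (∀ x ∈ Ioo a b, 0 < gammaPDFReal a2 a2 x - gammaPDFReal a1 a1 x) ∧
      (∀ x : ℝ, (0 < x ∧ x < a) ∨ b < x →
        gammaPDFReal a2 a2 x - gammaPDFReal a1 a1 x < 0) := by
  have h2 : 0 < a2 := h1.trans h12
  set d : ℝ := a2 - a1 with hdd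
  have hdpos : 0 < d := sub_pos.mpr h12
  have hΓ1 : 0 < Real.Gamma a1 := Real.Gamma_pos_of_pos h1
  have hΓ2 : 0 < Real.Gamma a2 := Real.Gamma_pos_of_pos h2
  set C1 : ℝ := a1 ^ a1 / Real.Gamma a1 with hC1def
  set C2 : ℝ := a2 ^ a2 / Real.Gamma a2 with hC2def
  have hC1 : 0 < C1 := div_pos (Real.rpow_pos_of_pos h1 _) hΓ1
  have hC2 : 0 < C2 := div_pos (Real.rpow_pos_of_pos h2 _) hΓ2
  set c : ℝ := (C1 / C2) ^ (1 / d) with hcdef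
  have hc0 : 0 < c := Real.rpow_pos_of_pos (div_pos hC1 hC2) _
  have hcd : c ^ d = C1 / C2 := by
    rw [hcdef, ← Real.rpow_mul (div_pos hC1 hC2).le, one_div_mul_cancel hdpos.ne',
      Real.rpow_one]
  -- the sign identity
  have hD : ∀ x : ℝ, 0 < x → gammaPDFReal a2 a2 x - gammaPDFReal a1 a1 x
      = C2 * (x ^ (a1 - 1) * exp (-(a1 * x))) * (psi x ^ d - c ^ d) := by
    intro x hx
    rw [gammaPDFReal, gammaPDFReal, if_pos hx.le, if_pos hx.le, hcd]
    have hpsid : psi x ^ d = x ^ d * exp (-(d * x)) := by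
      rw [psi, Real.mul_rpow hx.le (exp_pos _).le, ← Real.exp_mul]
      ring_nf
    have hx2 : x ^ (a2 - 1) = x ^ (a1 - 1) * x ^ d := by
      rw [← Real.rpow_add hx, hdd]; ring_nf
    have hex : exp (-(a2 * x)) = exp (-(a1 * x)) * exp (-(d * x)) := by
      rw [← Real.exp_add, hdd]; ring_nf
    rw [hpsid, hx2, hex, hC1def, hC2def]
    field_simp
  -- key inequality: c < psi 1
  have hpsi1 : psi 1 = exp (-1) := by rw [psi, one_mul]
  have hkey : c < psi 1 := by
    have h := gamma_key h1 h12
    have hr1 : C1 * exp (-a1) = a1 ^ a1 * exp (-a1) / Real.Gamma a1 := by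
      rw [hC1def]; ring
    have hr2 : C2 * exp (-a2) = a2 ^ a2 * exp (-a2) / Real.Gamma a2 := by
      rw [hC2def]; ring
    have hcc : C1 / C2 < exp (-d) := by
      rw [div_lt_iff₀ hC2, hdd, show -(a2 - a1) = -a2 + a1 by ring, Real.exp_add]
      have he1 : (0:ℝ) < exp (-a1) := exp_pos _
      rw [← sub_pos]
      have : exp (-a2) * exp a1 * C2 - C1
          = (C2 * exp (-a2) - C1 * exp (-a1)) * exp a1 := by
        have : exp (-a1) * exp a1 = 1 := by rw [← Real.exp_add]; simp
        nlinarith [this]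
      rw [this]
      apply mul_pos _ (exp_pos _)
      rw [hr1, hr2]; linarith
    have hmono : c < (exp (-d)) ^ (1 / d) :=
      Real.rpow_lt_rpow (div_pos hC1 hC2).le hcc (by positivity)
    have heq : (exp (-d)) ^ (1 / d) = exp (-1) := by
      rw [← Real.exp_mul]
      congr 1
      field_simp
    rw [hpsi1]
    rw [heq] at hmono
    exact hmono
  -- obtain a via IVT on [0, 1]
  obtain ⟨a, ha, hψa⟩ : ∃ a ∈ Ioo (0:ℝ) 1, psi a = c := by
    have hmem : c ∈ Ioo (psi 0) (psi 1) := by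
      constructor
      · simpa [psi] using hc0
      · exact hkey
    obtain ⟨a, ha, h⟩ := intermediate_value_Ioo (by norm_num) continuous_psi.continuousOn hmem
    exact ⟨a, ha, h⟩
  -- obtain M with psi M < c
  obtain ⟨M, hM1, hMc⟩ : ∃ M : ℝ, 1 < M ∧ psi M < c := by
    have h0 : Tendsto psi atTop (nhds 0) := by
      have := Real.tendsto_pow_mul_exp_neg_atTop_nhds_zero 1
      exact (by simpa using this : Tendsto (fun x : ℝ => x * exp (-x)) atTop (nhds 0))
    obtain ⟨M, hM⟩ := ((h0.eventually_lt_const hc0).and (eventually_gt_atTop 1)).exists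
    exact ⟨M, hM.2, hM.1⟩
  -- obtain b via IVT on [1, M] (decreasing)
  obtain ⟨b, hb, hψb⟩ : ∃ b ∈ Ioo (1:ℝ) M, psi b = c := by
    have hmem : c ∈ Ioo (psi M) (psi 1) := ⟨hMc, hkey⟩
    obtain ⟨b, hb, h⟩ := intermediate_value_Ioo' hM1.le continuous_psi.continuousOn hmem
    exact ⟨b, hb, h⟩
  refine ⟨a, b, ha.2, hb.1, ?_, ?_⟩
  · -- positive on (a, b)
    intro x hx
    have hx0 : 0 < x := ha.1.trans hx.1
    rw [hD x hx0]
    have hψ : c < psi x := by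
      rcases le_total x 1 with hx1 | hx1
      · have := strictMonoOn_psi ⟨ha.1.le, ha.2.le⟩ ⟨hx0.le, hx1⟩ hx.1
        rw [hψa] at this; exact this
      · have := strictAntiOn_psi hx1 hb.1.le hx.2
        rw [hψb] at this; exact this
    have hsub : 0 < psi x ^ d - c ^ d :=
      sub_pos.mpr (Real.rpow_lt_rpow hc0.le hψ hdpos)
    have ht : 0 < x ^ (a1 - 1) * exp (-(a1 * x)) := by positivity
    exact mul_pos (mul_pos hC2 ht) hsub
  · -- negative on (0, a) ∪ (b, ∞)
    intro x hx
    rcases hx with ⟨hx0, hxa⟩ | hxb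
    · rw [hD x hx0]
      have hψ : psi x < c := by
        have := strictMonoOn_psi ⟨hx0.le, (hxa.trans ha.2).le⟩ ⟨ha.1.le, ha.2.le⟩ hxa
        rw [hψa] at this; exact this
      have hsub : psi x ^ d - c ^ d < 0 :=
        sub_neg.mpr (Real.rpow_lt_rpow (psi_pos hx0).le hψ hdpos)
      have ht : 0 < x ^ (a1 - 1) * exp (-(a1 * x)) := by positivity
      exact mul_neg_of_pos_of_neg (mul_pos hC2 ht) hsub
    · have hx0 : 0 < x := by linarith [hb.1]
      rw [hD x hx0]
      have hψ : psi x < c := by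
        have := strictAntiOn_psi hb.1.le (show x ∈ Ici (1:ℝ) by
          simp only [mem_Ici]; linarith [hb.1]) hxb
        rw [hψb] at this; exact this
      have hsub : psi x ^ d - c ^ d < 0 :=
        sub_neg.mpr (Real.rpow_lt_rpow (psi_pos hx0).le hψ hdpos)
      have ht : 0 < x ^ (a1 - 1) * exp (-(a1 * x)) := by positivity
      exact mul_neg_of_pos_of_neg (mul_pos hC2 ht) hsub
end

section
/- For fixed ε ∈ (0,1) and r ≥ 1, the function n ↦ P(Q(nr) < 1−ε), where Q(m) ~ Gamma(m/2, m/2), is strictly decreasing over integers n ≥ 1. -/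
open MeasureTheory ProbabilityTheory Real Set

namespace GammaTail

/-- `h t = t - log t`. -/
noncomputable def h (t : ℝ) : ℝ := t - Real.log t

lemma h_one : h 1 = 1 := by simp [h]

lemma hasDerivAt_h {t : ℝ} (ht : 0 < t) : HasDerivAt h (1 - t⁻¹) t :=
  (hasDerivAt_id t).sub (Real.hasDerivAt_log ht.ne')

lemma continuousOn_h : ContinuousOn h (Ioi 0) := fun t ht =>
  ((hasDerivAt_h (mem_Ioi.mp ht)).continuousAt).continuousWithinAt

lemma h_strictMonoOn : StrictMonoOn h (Ici 1) := by
  apply strictMonoOn_of_deriv_pos (convex_Ici 1)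
  · exact continuousOn_h.mono fun t ht => mem_Ioi.mpr (lt_of_lt_of_le one_pos ht)
  · intro t ht
    rw [interior_Ici] at ht
    have ht1 : (1:ℝ) < t := ht
    rw [(hasDerivAt_h (by linarith)).deriv]
    have : t⁻¹ < 1 := inv_lt_one_of_one_lt₀ ht1
    linarith

lemma h_strictAntiOn : StrictAntiOn h (Ioc 0 1) := by
  apply strictAntiOn_of_deriv_neg (convex_Ioc 0 1)
  · exact continuousOn_h.mono fun t ht => ht.1
  · intro t ht
    rw [interior_Ioc] at ht
    rw [(hasDerivAt_h ht.1).deriv]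
    have : 1 < t⁻¹ := (one_lt_inv₀ ht.1).mpr ht.2
    linarith

lemma one_lt_h {t : ℝ} (ht : 0 < t) (hne : t ≠ 1) : 1 < h t := by
  have := Real.log_lt_sub_one_of_pos ht hne
  simp only [h]; linarith

/-- right-branch inverse of `h`. -/
noncomputable def hinv (c : ℝ) : ℝ := sInf {t : ℝ | 1 ≤ t ∧ h t = c}

lemma exists_right (c : ℝ) (hc : 1 < c) : ∃ t, 1 < t ∧ h t = c := by
  have hM : h ((c+2)^2) ≥ c := by
    have h1 : Real.log ((c+2)^2) = 2 * Real.log (c+2) := by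
      rw [sq]; rw [Real.log_mul (by linarith) (by linarith)]; ring
    have h2 : Real.log (c+2) ≤ c + 2 - 1 := Real.log_le_sub_one_of_pos (by linarith)
    simp only [h, h1]; nlinarith
  have hcont : ContinuousOn h (Icc 1 ((c+2)^2)) :=
    continuousOn_h.mono (fun t ht => lt_of_lt_of_le one_pos ht.1)
  have h1M : (1:ℝ) ≤ (c+2)^2 := by nlinarith
  have : c ∈ Icc (h 1) (h ((c+2)^2)) := ⟨by rw [h_one]; linarith, hM⟩
  obtain ⟨t, ht, hht⟩ := intermediate_value_Icc h1M hcont this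
  refine ⟨t, ?_, hht⟩
  rcases eq_or_lt_of_le ht.1 with h' | h'
  · exfalso; rw [← h', h_one] at hht; linarith
  · exact h'

lemma hinv_spec {c : ℝ} (hc : 1 < c) : 1 < hinv c ∧ h (hinv c) = c := by
  obtain ⟨t₀, ht₀, hht₀⟩ := exists_right c hc
  have hset : {t : ℝ | 1 ≤ t ∧ h t = c} = {t₀} := by
    ext t
    simp only [mem_setOf_eq, mem_singleton_iff]
    constructor
    · rintro ⟨h1, h2⟩
      exact h_strictMonoOn.injOn h1 (le_of_lt ht₀) (h2.trans hht₀.symm)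
    · rintro rfl; exact ⟨le_of_lt ht₀, hht₀⟩
  rw [hinv, hset, csInf_singleton]
  exact ⟨ht₀, hht₀⟩

lemma hinv_h {t : ℝ} (ht : 1 < t) : hinv (h t) = t := by
  have hc : 1 < h t := one_lt_h (by linarith) (by linarith)
  obtain ⟨h1, h2⟩ := hinv_spec hc
  exact h_strictMonoOn.injOn (le_of_lt h1) (le_of_lt ht) h2

lemma hinv_strictMonoOn : StrictMonoOn hinv (Ioi 1) := by
  intro c hc c' hc' hlt
  have s1 := hinv_spec (mem_Ioi.mp hc)
  have s2 := hinv_spec (mem_Ioi.mp hc')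
  by_contra hle
  push_neg at hle
  have := h_strictMonoOn.monotoneOn (le_of_lt s2.1) (le_of_lt s1.1) hle
  rw [s1.2, s2.2] at this
  linarith

lemma hinv_image : hinv '' (Ioi 1) = Ioi 1 := by
  ext t
  constructor
  · rintro ⟨c, hc, rfl⟩; exact (hinv_spec (mem_Ioi.mp hc)).1
  · intro ht
    exact ⟨h t, one_lt_h (by linarith [mem_Ioi.mp ht]) (by linarith [mem_Ioi.mp ht]),
      hinv_h (mem_Ioi.mp ht)⟩

lemma continuousAt_hinv {c : ℝ} (hc : 1 < c) : ContinuousAt hinv c := by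
  apply hinv_strictMonoOn.continuousAt_of_image_mem_nhds (isOpen_Ioi.mem_nhds hc)
  rw [hinv_image]
  exact isOpen_Ioi.mem_nhds (hinv_spec hc).1

lemma hasDerivAt_hinv {c : ℝ} (hc : 1 < c) :
    HasDerivAt hinv (1 - (hinv c)⁻¹)⁻¹ c := by
  have s := hinv_spec hc
  have h1 : (0:ℝ) < hinv c := by linarith [s.1]
  refine HasDerivAt.of_local_left_inverse (continuousAt_hinv hc) (hasDerivAt_h h1) ?_ ?_
  · have : (hinv c)⁻¹ < 1 := inv_lt_one_of_one_lt₀ s.1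
    intro hcon; rw [sub_eq_zero] at hcon; rw [← hcon] at this; exact lt_irrefl _ this
  · filter_upwards [isOpen_Ioi.mem_nhds hc] with y hy
    exact (hinv_spec (mem_Ioi.mp hy)).2

end GammaTail

namespace GammaTail

/-- conjugate point: `tau w` is the point `> 1` with `h (tau w) = h w`. -/
noncomputable def tau (w : ℝ) : ℝ := hinv (h w)

lemma h_gt_one_of_Ioo {w : ℝ} (hw : w ∈ Ioo (0:ℝ) 1) : 1 < h w :=
  one_lt_h hw.1 (ne_of_lt hw.2)

lemma tau_spec {w : ℝ} (hw : w ∈ Ioo (0:ℝ) 1) : 1 < tau w ∧ h (tau w) = h w :=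
  hinv_spec (h_gt_one_of_Ioo hw)

lemma one_lt_tau {w : ℝ} (hw : w ∈ Ioo (0:ℝ) 1) : 1 < tau w := (tau_spec hw).1

lemma h_tau {w : ℝ} (hw : w ∈ Ioo (0:ℝ) 1) : h (tau w) = h w := (tau_spec hw).2

/-- key inequality: `w * tau w < 1`. -/
lemma mul_tau_lt_one {w : ℝ} (hw : w ∈ Ioo (0:ℝ) 1) : w * tau w < 1 := by
  obtain ⟨hw0, hw1⟩ := hw
  -- first: h w < h (1/w), i.e. w - 1/w - 2 log w < 0 for w ∈ (0,1)
  have key : h w < h w⁻¹ := by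
    -- φ t = t - t⁻¹ - 2 log t is strictly increasing on Ioc 0 1, φ 1 = 0
    set φ : ℝ → ℝ := fun t => t - t⁻¹ - 2 * Real.log t with hφ
    have hd : ∀ t ∈ Ioo (0:ℝ) 1, HasDerivAt φ ((1 - t⁻¹)^2) t := by
      intro t ht
      have := ((hasDerivAt_id t).add ((hasDerivAt_inv (ne_of_gt ht.1)).neg)).sub
        (((Real.hasDerivAt_log (ne_of_gt ht.1))).const_mul 2)
      refine HasDerivAt.congr_deriv (this : HasDerivAt φ (1 + - -(t ^ 2)⁻¹ - 2 * t⁻¹) t) ?_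
      have : t ≠ 0 := ne_of_gt ht.1
      ring
    have hmono : StrictMonoOn φ (Ioc (0:ℝ) 1) := by
      apply strictMonoOn_of_deriv_pos (convex_Ioc 0 1)
      · intro t ht
        exact (((hasDerivAt_id t).add ((hasDerivAt_inv (ne_of_gt ht.1)).neg)).sub
          (((Real.hasDerivAt_log (ne_of_gt ht.1))).const_mul 2)).continuousAt.continuousWithinAt
      · intro t ht
        rw [interior_Ioc] at ht
        rw [(hd t ht).deriv]
        have hne : 1 - t⁻¹ ≠ 0 := by
          rw [sub_ne_zero]
          intro hcon
          rw [eq_comm, inv_eq_one] at hcon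
          rw [hcon] at ht
          exact lt_irrefl _ ht.2
        positivity
    have : φ w < φ 1 := hmono ⟨hw0, le_of_lt hw1⟩ ⟨one_pos, le_refl 1⟩ hw1
    have hφ1 : φ 1 = 0 := by simp [hφ]
    rw [hφ1] at this
    have hlog : Real.log w⁻¹ = - Real.log w := Real.log_inv w
    simp only [h, hlog]
    simp only [hφ] at this
    linarith
  -- conclude: tau w < w⁻¹
  have h1w : 1 < w⁻¹ := (one_lt_inv₀ hw0).mpr hw1
  have htau := tau_spec ⟨hw0, hw1⟩
  have : tau w < w⁻¹ := by
    by_contra hle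
    push_neg at hle
    have := h_strictMonoOn.monotoneOn (le_of_lt h1w) (le_of_lt htau.1) hle
    rw [htau.2] at this
    linarith
  calc w * tau w < w * w⁻¹ := by exact mul_lt_mul_of_pos_left this hw0
  _ = 1 := mul_inv_cancel₀ (ne_of_gt hw0)

lemma hasDerivAt_tau {w : ℝ} (hw : w ∈ Ioo (0:ℝ) 1) :
    HasDerivAt tau ((1 - (tau w)⁻¹)⁻¹ * (1 - w⁻¹)) w := by
  have hc := h_gt_one_of_Ioo hw
  have := (hasDerivAt_hinv hc).comp w (hasDerivAt_h hw.1)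
  exact this

lemma tau_image : tau '' (Ioo 0 1) = Ioi 1 := by
  ext y
  constructor
  · rintro ⟨w, hw, rfl⟩; exact one_lt_tau hw
  · intro hy
    have hy1 : (1:ℝ) < y := hy
    have hc : 1 < h y := one_lt_h (by linarith) (by linarith)
    -- find w ∈ (0,1) with h w = h y via IVT on [exp (-(h y)), 1]
    set w₀ : ℝ := Real.exp (-(h y)) with hw₀
    have hw₀pos : 0 < w₀ := Real.exp_pos _
    have hw₀lt : w₀ < 1 := by
      rw [hw₀, Real.exp_lt_one_iff]; linarith
    have hhw₀ : h y ≤ h w₀ := by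
      have : Real.log w₀ = -(h y) := Real.log_exp _
      simp only [h, this]
      linarith [Real.exp_pos (-(h y))]
    have hcont : ContinuousOn h (Icc w₀ 1) :=
      continuousOn_h.mono (fun t ht => lt_of_lt_of_le hw₀pos ht.1)
    have : h y ∈ Icc (h 1) (h w₀) := ⟨by rw [h_one]; linarith, hhw₀⟩
    obtain ⟨w, hwmem, hhw⟩ := intermediate_value_Icc' (le_of_lt hw₀lt) hcont this
    have hwne : w ≠ 1 := by
      intro hcon; rw [hcon, h_one] at hhw; linarith
    have hwI : w ∈ Ioo (0:ℝ) 1 :=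
      ⟨lt_of_lt_of_le hw₀pos hwmem.1, lt_of_le_of_ne hwmem.2 hwne⟩
    refine ⟨w, hwI, ?_⟩
    rw [tau, hhw, hinv_h hy1]

lemma tau_injOn : InjOn tau (Ioo 0 1) := by
  intro w1 h1 w2 h2 heq
  have e1 := h_tau h1
  have e2 := h_tau h2
  rw [heq, e2] at e1
  exact h_strictAntiOn.injOn ⟨h1.1, le_of_lt h1.2⟩ ⟨h2.1, le_of_lt h2.2⟩ e1.symm

/-- weight function for folding `(1,∞)` onto `(0,1)` -/
noncomputable def k (w : ℝ) : ℝ := (1 - w) / (tau w - 1)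

lemma k_nonneg {w : ℝ} (hw : w ∈ Ioo (0:ℝ) 1) : 0 ≤ k w := by
  have := one_lt_tau hw
  have := hw.2
  apply div_nonneg <;> linarith

lemma tau_deriv_eq {w : ℝ} (hw : w ∈ Ioo (0:ℝ) 1) :
    (1 - (tau w)⁻¹)⁻¹ * (1 - w⁻¹) = tau w * (w - 1) / ((tau w - 1) * w) := by
  have h1 : 1 < tau w := one_lt_tau hw
  have h2 : 0 < w := hw.1
  have ht0 : (0:ℝ) < tau w := by linarith
  field_simp

lemma hasDerivAt_k {w : ℝ} (hw : w ∈ Ioo (0:ℝ) 1) :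
    HasDerivAt k ((-1 * (tau w - 1) - (1 - w) * (tau w * (w - 1) / ((tau w - 1) * w))) / (tau w - 1)^2) w := by
  have h1 : 1 < tau w := one_lt_tau hw
  have hT := (hasDerivAt_tau hw)
  rw [tau_deriv_eq hw] at hT
  have hnum : HasDerivAt (fun w => 1 - w) (-1 : ℝ) w := by
    simpa using (hasDerivAt_id w).const_sub 1
  have hden : HasDerivAt (fun w => tau w - 1) (tau w * (w - 1) / ((tau w - 1) * w)) w :=
    hT.sub_const 1
  exact hnum.div hden (by intro hcon; rw [sub_eq_zero] at hcon; rw [← hcon] at h1; exact lt_irrefl _ h1)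

lemma k_deriv_nonneg {w : ℝ} (hw : w ∈ Ioo (0:ℝ) 1) :
    0 ≤ (-1 * (tau w - 1) - (1 - w) * (tau w * (w - 1) / ((tau w - 1) * w))) / (tau w - 1)^2 := by
  have h1 : 1 < tau w := one_lt_tau hw
  have h2 : 0 < w := hw.1
  have h3 : w < 1 := hw.2
  have hkey : w * tau w ≤ 1 := le_of_lt (mul_tau_lt_one hw)
  have hne1 : tau w - 1 ≠ 0 := by intro hcon; rw [sub_eq_zero] at hcon; rw [hcon] at h1; exact lt_irrefl _ h1
  have hne2 : w ≠ 0 := ne_of_gt h2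
  apply div_nonneg _ (sq_nonneg _)
  have heq : -1 * (tau w - 1) - (1 - w) * (tau w * (w - 1) / ((tau w - 1) * w))
      = ((1 - w * tau w) * (tau w - w)) / ((tau w - 1) * w) := by
    field_simp
    ring
  rw [heq]
  apply div_nonneg
  · apply mul_nonneg <;> linarith
  · apply mul_nonneg <;> linarith

/-- `k` is monotone on `Ioo 0 1`. -/
lemma k_monotoneOn : MonotoneOn k (Ioo (0:ℝ) 1) := by
  apply monotoneOn_of_deriv_nonneg (convex_Ioo 0 1)
  · intro w hw
    exact (hasDerivAt_k hw).continuousAt.continuousWithinAt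
  · intro w hw
    rw [interior_Ioo] at hw
    exact (hasDerivAt_k hw).differentiableAt.differentiableWithinAt
  · intro w hw
    rw [interior_Ioo] at hw
    rw [(hasDerivAt_k hw).deriv]
    exact k_deriv_nonneg hw

end GammaTail

namespace GammaTail

/-- the unnormalized gamma density with shape and rate `c` -/
noncomputable def g (c t : ℝ) : ℝ := t ^ (c - 1) * Real.exp (-(c * t))

lemma g_pos {c t : ℝ} (ht : 0 < t) : 0 < g c t := by
  unfold g
  positivity

lemma g_eq {c t : ℝ} (ht : 0 < t) :
    g c t = Real.exp (c * (Real.log t - t)) / t := by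
  unfold g
  have hrhs : Real.exp (c * (Real.log t - t)) / t
      = Real.exp (c * (Real.log t - t) - Real.log t) := by
    rw [Real.exp_sub, Real.exp_log ht]
  rw [hrhs, Real.rpow_def_of_pos ht, ← Real.exp_add]
  congr 1
  ring

lemma psi_strictMonoOn : StrictMonoOn (fun t : ℝ => Real.log t - t) (Ioo (0:ℝ) 1) := by
  apply strictMonoOn_of_deriv_pos (convex_Ioo 0 1)
  · intro t ht
    exact ((Real.hasDerivAt_log (ne_of_gt ht.1)).sub (hasDerivAt_id' t)).continuousAt.continuousWithinAt
  · intro t ht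
    rw [interior_Ioo] at ht
    rw [(show HasDerivAt (fun t : ℝ => Real.log t - t) (t⁻¹ - 1) t from (Real.hasDerivAt_log (ne_of_gt ht.1)).sub (hasDerivAt_id' t)).deriv]
    have : 1 < t⁻¹ := (one_lt_inv₀ ht.1).mpr ht.2
    linarith

lemma g_cross_le {a b u v : ℝ} (hab : a ≤ b) (hu : 0 < u) (hv : 0 < v)
    (hψ : Real.log u - u ≤ Real.log v - v) : g b u * g a v ≤ g a u * g b v := by
  rw [g_eq hu, g_eq hv, g_eq hu, g_eq hv, div_mul_div_comm, div_mul_div_comm]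
  apply div_le_div_of_nonneg_right _ (by positivity)
  · rw [← Real.exp_add, ← Real.exp_add, Real.exp_le_exp]
    nlinarith

lemma g_cross_lt {a b u v : ℝ} (hab : a < b) (hu : 0 < u) (hv : 0 < v)
    (hψ : Real.log u - u < Real.log v - v) : g b u * g a v < g a u * g b v := by
  rw [g_eq hu, g_eq hv, g_eq hu, g_eq hv, div_mul_div_comm, div_mul_div_comm]
  apply div_lt_div_of_pos_right _ (by positivity)
  · rw [← Real.exp_add, ← Real.exp_add, Real.exp_lt_exp]
    nlinarith

lemma integrableOn_g {c : ℝ} (hc : 0 < c) : IntegrableOn (g c) (Ioi (0:ℝ)) := by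
  have := integrableOn_rpow_mul_exp_neg_mul_rpow (s := c - 1) (p := 1) (b := c)
    (by linarith) one_pos hc
  unfold g
  simpa [g, Real.rpow_one, neg_mul] using this

lemma integral_g_Ioi {c : ℝ} (hc : 0 < c) :
    ∫ t in Ioi (0:ℝ), g c t = (1 / c) ^ c * Real.Gamma c :=
  Real.integral_rpow_mul_exp_neg_mul_Ioi hc hc

lemma integral_g_Ioi_pos {c : ℝ} (hc : 0 < c) : 0 < ∫ t in Ioi (0:ℝ), g c t := by
  rw [integral_g_Ioi hc]
  have h1 : (0:ℝ) < (1 / c) ^ c := Real.rpow_pos_of_pos (by positivity) c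
  exact mul_pos h1 (Real.Gamma_pos_of_pos hc)

lemma psi_tau {w : ℝ} (hw : w ∈ Ioo (0:ℝ) 1) :
    Real.log (tau w) - tau w = Real.log w - w := by
  have := h_tau hw
  unfold h at this
  linarith

lemma hasDerivWithinAt_tau {w : ℝ} (hw : w ∈ Ioo (0:ℝ) 1) :
    HasDerivWithinAt tau ((1 - (tau w)⁻¹)⁻¹ * (1 - w⁻¹)) (Ioo (0:ℝ) 1) w :=
  (hasDerivAt_tau hw).hasDerivWithinAt

lemma abs_tau_deriv_mul_g {c w : ℝ} (hw : w ∈ Ioo (0:ℝ) 1) :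
    |(1 - (tau w)⁻¹)⁻¹ * (1 - w⁻¹)| * g c (tau w) = k w * g c w := by
  have h1 : 1 < tau w := one_lt_tau hw
  have h2 : 0 < w := hw.1
  have h3 : w < 1 := hw.2
  have ht0 : (0:ℝ) < tau w := by linarith
  rw [tau_deriv_eq hw]
  have hd : (0:ℝ) < (tau w - 1) * w := mul_pos (by linarith) h2
  have habs : |tau w * (w - 1) / ((tau w - 1) * w)| = tau w * (1 - w) / ((tau w - 1) * w) := by
    rw [abs_div, abs_of_pos hd, abs_mul, abs_of_pos ht0, abs_of_neg (show w - 1 < 0 by linarith)]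
    ring
  have hne1 : tau w - 1 ≠ 0 := by linarith
  have hne2 : w ≠ 0 := ne_of_gt h2
  have hne3 : tau w ≠ 0 := ne_of_gt ht0
  rw [habs, g_eq ht0, psi_tau hw, g_eq h2, k]
  field_simp

lemma integral_g_Ioi_one_eq {c : ℝ} :
    ∫ t in Ioi (1:ℝ), g c t = ∫ w in Ioo (0:ℝ) 1, k w * g c w := by
  rw [← tau_image,
    integral_image_eq_integral_abs_deriv_smul measurableSet_Ioo
      (fun w hw => hasDerivWithinAt_tau hw) tau_injOn]
  apply setIntegral_congr_fun measurableSet_Ioo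
  intro w hw
  simpa [smul_eq_mul] using abs_tau_deriv_mul_g (c := c) hw

lemma integrableOn_k_mul_g {c : ℝ} (hc : 0 < c) :
    IntegrableOn (fun w => k w * g c w) (Ioo (0:ℝ) 1) := by
  have h1 : IntegrableOn (g c) (tau '' (Ioo (0:ℝ) 1)) := by
    rw [tau_image]
    exact (integrableOn_g hc).mono_set (Ioi_subset_Ioi zero_le_one)
  rw [integrableOn_image_iff_integrableOn_abs_deriv_smul measurableSet_Ioo
    (fun w hw => hasDerivWithinAt_tau hw) tau_injOn] at h1
  apply h1.congr_fun _ measurableSet_Ioo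
  intro w hw
  have := abs_tau_deriv_mul_g (c := c) hw
  simpa [smul_eq_mul] using this

end GammaTail

namespace GammaTail

lemma partI {a b x : ℝ} (ha : 0 < a) (hab : a < b) (hx0 : 0 < x) (hx1 : x < 1) :
    (∫ t in Ioo (0:ℝ) x, g b t) * (∫ t in Ioo x (1:ℝ), g a t)
      < (∫ t in Ioo (0:ℝ) x, g a t) * (∫ t in Ioo x (1:ℝ), g b t) := by
  have hb : 0 < b := lt_trans ha hab
  set μpr : Measure (ℝ × ℝ) := (volume : Measure ℝ).prod volume with hμpr
  set S : Set (ℝ × ℝ) := (Ioo (0:ℝ) x) ×ˢ (Ioo x (1:ℝ)) with hS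
  have hmS : MeasurableSet S := measurableSet_Ioo.prod measurableSet_Ioo
  have hIab : ∀ c : ℝ, 0 < c → IntegrableOn (g c) (Ioo (0:ℝ) x) := fun c hc =>
    (integrableOn_g hc).mono_set Ioo_subset_Ioi_self
  have hIab' : ∀ c : ℝ, 0 < c → IntegrableOn (g c) (Ioo x (1:ℝ)) := fun c hc =>
    (integrableOn_g hc).mono_set (fun t ht => lt_trans hx0 ht.1)
  have hprod : ∀ (c d : ℝ), 0 < c → 0 < d →
      Integrable (fun z : ℝ × ℝ => g c z.1 * g d z.2) (μpr.restrict S) := by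
    intro c d hc hd
    rw [hμpr, hS, ← Measure.prod_restrict]
    exact (hIab c hc).mul_prod (hIab' d hd)
  have hpos : ∀ z ∈ S, 0 < g a z.1 * g b z.2 - g b z.1 * g a z.2 := by
    rintro ⟨u, v⟩ ⟨hu, hv⟩
    have h1 : u ∈ Ioo (0:ℝ) 1 := ⟨hu.1, lt_trans hu.2 hx1⟩
    have h2 : v ∈ Ioo (0:ℝ) 1 := ⟨lt_trans hx0 hv.1, hv.2⟩
    have hψ : Real.log u - u < Real.log v - v :=
      psi_strictMonoOn h1 h2 (lt_trans hu.2 hv.1)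
    have := g_cross_lt hab h1.1 h2.1 hψ
    linarith
  have hFint : Integrable (fun z : ℝ × ℝ => g a z.1 * g b z.2 - g b z.1 * g a z.2)
      (μpr.restrict S) := (hprod a b ha hb).sub (hprod b a hb ha)
  have hInt : 0 < ∫ z in S, (g a z.1 * g b z.2 - g b z.1 * g a z.2) ∂μpr := by
    rw [setIntegral_pos_iff_support_of_nonneg_ae ?hnn hFint]
    · have hsub : S ⊆ Function.support fun z : ℝ × ℝ => g a z.1 * g b z.2 - g b z.1 * g a z.2 :=
        fun z hz => ne_of_gt (hpos z hz)
      rw [inter_eq_self_of_subset_right hsub]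
      rw [hμpr, hS, Measure.prod_prod, Real.volume_Ioo, Real.volume_Ioo, sub_zero]
      exact ENNReal.mul_pos (by simp [ENNReal.ofReal_pos, hx0]) (by simp [ENNReal.ofReal_pos]; linarith)
    case hnn =>
      rw [Filter.EventuallyLE, ae_restrict_iff' hmS]
      exact ae_of_all _ fun z hz => le_of_lt (hpos z hz)
  have hsep : ∀ (c d : ℝ), ∫ z in S, (g c z.1 * g d z.2) ∂μpr
      = (∫ t in Ioo (0:ℝ) x, g c t) * (∫ t in Ioo x (1:ℝ), g d t) := by
    intro c d
    rw [hμpr, hS]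
    exact setIntegral_prod_mul (g c) (g d) _ _
  rw [integral_sub (hprod a b ha hb) (hprod b a hb ha), hsep, hsep] at hInt
  linarith

end GammaTail

namespace GammaTail

lemma core_pointwise {a b x : ℝ} (hab : a < b)
    {u v : ℝ} (hu : u ∈ Ioo (0:ℝ) 1) (hv : v ∈ Ioo (0:ℝ) 1) (hvu : v ≤ u) :
    (Ioo (0:ℝ) x).indicator (g b) u * (k v * g a v)
      + (Ioo (0:ℝ) x).indicator (g b) v * (k u * g a u)
    ≤ (Ioo (0:ℝ) x).indicator (g a) u * (k v * g b v)
      + (Ioo (0:ℝ) x).indicator (g a) v * (k u * g b u) := by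
  have hψ : Real.log v - v ≤ Real.log u - u :=
    psi_strictMonoOn.monotoneOn hv hu hvu
  have hE : g b v * g a u ≤ g a v * g b u := g_cross_le (le_of_lt hab) hv.1 hu.1 hψ
  by_cases hux : u < x
  · have humem : u ∈ Ioo (0:ℝ) x := ⟨hu.1, hux⟩
    have hvmem : v ∈ Ioo (0:ℝ) x := ⟨hv.1, lt_of_le_of_lt hvu hux⟩
    rw [indicator_of_mem humem, indicator_of_mem hvmem,
        indicator_of_mem humem, indicator_of_mem hvmem]
    have hk : k v ≤ k u := k_monotoneOn hv hu hvu
    have key : 0 ≤ (g a v * g b u - g b v * g a u) * (k u - k v) :=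
      mul_nonneg (by linarith) (by linarith)
    nlinarith [key]
  · have humem : u ∉ Ioo (0:ℝ) x := fun hcon => hux hcon.2
    rw [indicator_of_notMem humem, indicator_of_notMem humem, zero_mul, zero_mul,
        zero_add, zero_add]
    by_cases hvx : v < x
    · have hvmem : v ∈ Ioo (0:ℝ) x := ⟨hv.1, hvx⟩
      rw [indicator_of_mem hvmem, indicator_of_mem hvmem]
      have hk : 0 ≤ k u := k_nonneg hu
      nlinarith [mul_le_mul_of_nonneg_left hE hk]
    · have hvmem : v ∉ Ioo (0:ℝ) x := fun hcon => hvx hcon.2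
      rw [indicator_of_notMem hvmem, indicator_of_notMem hvmem, zero_mul, zero_mul]

lemma partII {a b x : ℝ} (ha : 0 < a) (hab : a < b) (hx0 : 0 < x) (hx1 : x < 1) :
    (∫ t in Ioo (0:ℝ) x, g b t) * (∫ w in Ioo (0:ℝ) 1, k w * g a w)
      ≤ (∫ t in Ioo (0:ℝ) x, g a t) * (∫ w in Ioo (0:ℝ) 1, k w * g b w) := by
  have hb : 0 < b := lt_trans ha hab
  set μpr : Measure (ℝ × ℝ) := (volume : Measure ℝ).prod volume with hμpr
  set S : Set (ℝ × ℝ) := (Ioo (0:ℝ) 1) ×ˢ (Ioo (0:ℝ) 1) with hS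
  have hmS : MeasurableSet S := measurableSet_Ioo.prod measurableSet_Ioo
  have hxsub : Ioo (0:ℝ) x ⊆ Ioo (0:ℝ) 1 := Ioo_subset_Ioo_right (le_of_lt hx1)
  have hind : ∀ c : ℝ, 0 < c → IntegrableOn ((Ioo (0:ℝ) x).indicator (g c)) (Ioo (0:ℝ) 1) := by
    intro c hc
    exact (((integrableOn_g hc).mono_set Ioo_subset_Ioi_self).integrable_indicator
      measurableSet_Ioo).integrableOn
  have hkg : ∀ c : ℝ, 0 < c → IntegrableOn (fun w => k w * g c w) (Ioo (0:ℝ) 1) :=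
    fun c hc => integrableOn_k_mul_g hc
  have h2d : ∀ (φ χ : ℝ → ℝ), IntegrableOn φ (Ioo (0:ℝ) 1) → IntegrableOn χ (Ioo (0:ℝ) 1) →
      Integrable (fun z : ℝ × ℝ => φ z.1 * χ z.2) (μpr.restrict S) := by
    intro φ χ hφ hχ
    rw [hμpr, hS, ← Measure.prod_restrict]
    exact hφ.mul_prod hχ
  have h2d' : ∀ (φ χ : ℝ → ℝ), IntegrableOn φ (Ioo (0:ℝ) 1) → IntegrableOn χ (Ioo (0:ℝ) 1) →
      Integrable (fun z : ℝ × ℝ => φ z.2 * χ z.1) (μpr.restrict S) := by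
    intro φ χ hφ hχ
    exact (h2d χ φ hχ hφ).congr (ae_of_all _ fun z => mul_comm (χ z.1) (φ z.2))
  have hswap : ∀ (φ χ : ℝ → ℝ), ∫ z in S, φ z.2 * χ z.1 ∂μpr
      = (∫ w in Ioo (0:ℝ) 1, χ w) * ∫ w in Ioo (0:ℝ) 1, φ w := by
    intro φ χ
    rw [setIntegral_congr_fun hmS (g := fun z : ℝ × ℝ => χ z.1 * φ z.2)
      (fun z _ => mul_comm (φ z.2) (χ z.1)), hμpr, hS]
    exact setIntegral_prod_mul χ φ _ _
  have hstraight : ∀ (φ χ : ℝ → ℝ), ∫ z in S, φ z.1 * χ z.2 ∂μpr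
      = (∫ w in Ioo (0:ℝ) 1, φ w) * ∫ w in Ioo (0:ℝ) 1, χ w := by
    intro φ χ
    rw [hμpr, hS]
    exact setIntegral_prod_mul φ χ _ _
  have hindint : ∀ c : ℝ, ∫ w in Ioo (0:ℝ) 1, (Ioo (0:ℝ) x).indicator (g c) w
      = ∫ t in Ioo (0:ℝ) x, g c t := by
    intro c
    rw [setIntegral_indicator measurableSet_Ioo, inter_eq_self_of_subset_right hxsub]
  have i1 := h2d _ _ (hind a ha) (hkg b hb)
  have i2 := h2d' _ _ (hind a ha) (hkg b hb)
  have i3 := h2d _ _ (hind b hb) (hkg a ha)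
  have i4 := h2d' _ _ (hind b hb) (hkg a ha)
  have m1 : ∫ z in S, ((Ioo (0:ℝ) x).indicator (g b) z.1 * (k z.2 * g a z.2)
        + (Ioo (0:ℝ) x).indicator (g b) z.2 * (k z.1 * g a z.1)) ∂μpr
      ≤ ∫ z in S, ((Ioo (0:ℝ) x).indicator (g a) z.1 * (k z.2 * g b z.2)
        + (Ioo (0:ℝ) x).indicator (g a) z.2 * (k z.1 * g b z.1)) ∂μpr := by
    refine setIntegral_mono_on (i3.add i4) (i1.add i2) hmS ?_
    rintro ⟨u, v⟩ hz
    have hu : u ∈ Ioo (0:ℝ) 1 := hz.1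
    have hv : v ∈ Ioo (0:ℝ) 1 := hz.2
    rcases le_total v u with hvu | hvu
    · have := core_pointwise (x := x) hab hu hv hvu
      linarith
    · have := core_pointwise (x := x) hab hv hu hvu
      linarith
  rw [integral_add i3 i4, integral_add i1 i2] at m1
  have e1 : ∫ z in S, (Ioo (0:ℝ) x).indicator (g a) z.1 * (k z.2 * g b z.2) ∂μpr
      = (∫ t in Ioo (0:ℝ) x, g a t) * ∫ w in Ioo (0:ℝ) 1, k w * g b w := by
    rw [hstraight ((Ioo (0:ℝ) x).indicator (g a)) (fun w => k w * g b w), hindint]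
  have e2 : ∫ z in S, (Ioo (0:ℝ) x).indicator (g a) z.2 * (k z.1 * g b z.1) ∂μpr
      = (∫ w in Ioo (0:ℝ) 1, k w * g b w) * ∫ t in Ioo (0:ℝ) x, g a t := by
    rw [hswap ((Ioo (0:ℝ) x).indicator (g a)) (fun w => k w * g b w), hindint]
  have e3 : ∫ z in S, (Ioo (0:ℝ) x).indicator (g b) z.1 * (k z.2 * g a z.2) ∂μpr
      = (∫ t in Ioo (0:ℝ) x, g b t) * ∫ w in Ioo (0:ℝ) 1, k w * g a w := by
    rw [hstraight ((Ioo (0:ℝ) x).indicator (g b)) (fun w => k w * g a w), hindint]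
  have e4 : ∫ z in S, (Ioo (0:ℝ) x).indicator (g b) z.2 * (k z.1 * g a z.1) ∂μpr
      = (∫ w in Ioo (0:ℝ) 1, k w * g a w) * ∫ t in Ioo (0:ℝ) x, g b t := by
    rw [hswap ((Ioo (0:ℝ) x).indicator (g b)) (fun w => k w * g a w), hindint]
  rw [e1, e2, e3, e4] at m1
  linarith

end GammaTail

namespace GammaTail

lemma T_split {c x : ℝ} (hc : 0 < c) (hx0 : 0 < x) (hx1 : x < 1) :
    ∫ t in Ioi (0:ℝ), g c t
      = (∫ t in Ioo (0:ℝ) x, g c t) + (∫ t in Ioo x (1:ℝ), g c t) + (∫ t in Ioi (1:ℝ), g c t) := by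
  have hint := integrableOn_g hc
  have e1 : Ioc (0:ℝ) x ∪ Ioi x = Ioi 0 := Ioc_union_Ioi_eq_Ioi (le_of_lt hx0)
  have e2 : Ioc x (1:ℝ) ∪ Ioi 1 = Ioi x := Ioc_union_Ioi_eq_Ioi (le_of_lt hx1)
  have hsub1 : Ioc (0:ℝ) x ⊆ Ioi 0 := fun t ht => ht.1
  have hsub2 : Ioi x ⊆ Ioi (0:ℝ) := Ioi_subset_Ioi (le_of_lt hx0)
  have hsub3 : Ioc x (1:ℝ) ⊆ Ioi 0 := fun t ht => lt_trans hx0 ht.1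
  have hsub4 : Ioi (1:ℝ) ⊆ Ioi 0 := Ioi_subset_Ioi zero_le_one
  rw [← e1, setIntegral_union Ioc_disjoint_Ioi_same measurableSet_Ioi
    (hint.mono_set hsub1) (hint.mono_set hsub2), ← e2,
    setIntegral_union Ioc_disjoint_Ioi_same measurableSet_Ioi
    (hint.mono_set hsub3) (hint.mono_set hsub4),
    setIntegral_congr_set (Ioo_ae_eq_Ioc (a := (0:ℝ)) (b := x)).symm,
    setIntegral_congr_set (Ioo_ae_eq_Ioc (a := x) (b := (1:ℝ))).symm]
  ring

lemma key_ineq {a b x : ℝ} (ha : 0 < a) (hab : a < b) (hx0 : 0 < x) (hx1 : x < 1) :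
    (∫ t in Ioo (0:ℝ) x, g b t) * (∫ t in Ioi (0:ℝ), g a t)
      < (∫ t in Ioo (0:ℝ) x, g a t) * (∫ t in Ioi (0:ℝ), g b t) := by
  have hb : 0 < b := lt_trans ha hab
  rw [T_split ha hx0 hx1, T_split hb hx0 hx1, integral_g_Ioi_one_eq, integral_g_Ioi_one_eq]
  have p1 := partI ha hab hx0 hx1
  have p2 := partII ha hab hx0 hx1
  nlinarith [p1, p2]

lemma gamma_toReal {c x : ℝ} (hc : 0 < c) (hx0 : 0 < x) :
    (gammaMeasure c c (Iio x)).toReal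
      = (c ^ c / Real.Gamma c) * ∫ t in Ioo (0:ℝ) x, g c t := by
  rw [gammaMeasure, withDensity_apply _ measurableSet_Iio]
  have hsplit : ∫⁻ t in Iio x, gammaPDF c c t = ∫⁻ t in Ioo (0:ℝ) x, gammaPDF c c t := by
    rw [← Iio_union_Ico_eq_Iio (le_of_lt hx0),
      lintegral_union measurableSet_Ico ((Iio_disjoint_Ici le_rfl).mono_right Ico_subset_Ici_self),
      lintegral_gammaPDF_of_nonpos le_rfl, zero_add,
      setLIntegral_congr (Ioo_ae_eq_Ico (a := (0:ℝ)) (b := x)).symm]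
  rw [hsplit]
  have hnn : 0 ≤ᵐ[volume.restrict (Ioo (0:ℝ) x)] gammaPDFReal c c :=
    ae_of_all _ fun t => gammaPDFReal_nonneg hc hc t
  have hmeas : AEStronglyMeasurable (gammaPDFReal c c) (volume.restrict (Ioo (0:ℝ) x)) :=
    (measurable_gammaPDFReal c c).aestronglyMeasurable.restrict
  have := integral_eq_lintegral_of_nonneg_ae hnn hmeas
  simp only [gammaPDF]
  rw [← this]
  have heq : ∀ t ∈ Ioo (0:ℝ) x, gammaPDFReal c c t = (c ^ c / Real.Gamma c) * g c t := by
    intro t ht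
    rw [gammaPDFReal, if_pos (le_of_lt ht.1), g]
    ring
  rw [setIntegral_congr_fun measurableSet_Ioo heq, integral_const_mul]

lemma norm_const {c : ℝ} (hc : 0 < c) :
    (c ^ c / Real.Gamma c) = (∫ t in Ioi (0:ℝ), g c t)⁻¹ := by
  rw [integral_g_Ioi hc, one_div, Real.inv_rpow (le_of_lt hc), mul_inv, inv_inv,
    div_eq_mul_inv]

end GammaTail

namespace GammaTail

lemma main_measure {a b x : ℝ} (ha : 0 < a) (hab : a < b) (hx0 : 0 < x) (hx1 : x < 1) :
    (gammaMeasure b b (Iio x)).toReal < (gammaMeasure a a (Iio x)).toReal := by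
  have hb : 0 < b := lt_trans ha hab
  rw [gamma_toReal ha hx0, gamma_toReal hb hx0, norm_const ha, norm_const hb]
  have hTa : 0 < ∫ t in Ioi (0:ℝ), g a t := integral_g_Ioi_pos ha
  have hTb : 0 < ∫ t in Ioi (0:ℝ), g b t := integral_g_Ioi_pos hb
  rw [inv_mul_eq_div, inv_mul_eq_div, div_lt_div_iff₀ hTb hTa]
  exact key_ineq ha hab hx0 hx1

end GammaTail

open GammaTail in
/-- For fixed `ε ∈ (0,1)` and `r ≥ 1`, the map `n ↦ P(Q(nr) < 1−ε)`, where
`Q(m) ~ Gamma(m/2, m/2)`, is strictly decreasing over integers `n ≥ 1`. -/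
theorem gamma_lower_tail_strictAnti (ε : ℝ) (hε : ε ∈ Ioo (0:ℝ) 1) (r : ℕ) (hr : 1 ≤ r) :
    ∀ n m : ℕ, 1 ≤ n → n < m →
      (gammaMeasure ((m * r : ℕ) / 2 : ℝ) ((m * r : ℕ) / 2 : ℝ) (Iio (1 - ε))).toReal
        < (gammaMeasure ((n * r : ℕ) / 2 : ℝ) ((n * r : ℕ) / 2 : ℝ) (Iio (1 - ε))).toReal := by
  intro n m hn hnm
  have hx0 : 0 < 1 - ε := by linarith [hε.2]
  have hx1 : 1 - ε < 1 := by linarith [hε.1]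
  have hnr : 1 ≤ n * r := Nat.one_le_iff_ne_zero.mpr (Nat.mul_ne_zero
    (Nat.one_le_iff_ne_zero.mp hn) (Nat.one_le_iff_ne_zero.mp hr))
  have ha : (0:ℝ) < ((n * r : ℕ) : ℝ) / 2 := by
    have : (1:ℝ) ≤ ((n * r : ℕ) : ℝ) := by exact_mod_cast hnr
    linarith
  have hab : ((n * r : ℕ) : ℝ) / 2 < ((m * r : ℕ) : ℝ) / 2 := by
    have : n * r < m * r := (Nat.mul_lt_mul_right (lt_of_lt_of_le Nat.zero_lt_one hr)).mpr hnm
    have : ((n * r : ℕ) : ℝ) < ((m * r : ℕ) : ℝ) := by exact_mod_cast this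
    linarith
  exact main_measure ha hab hx0 hx1
end
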